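/- arXiv:2501.10523 — 2 statements merged into one kernel-verified Lean document; each statement's English description precedes it below -/
import Mathlib

section
/- Let a, λ, μ, C be positive real numbers with μ² − 4aλ > 0 and λ < C(μ − aC), and set x_e = (μ − √(μ² − 4aλ))/(2a). Then there exists ε > 0 such that every function f : ℝ → ℝ satisfying f(0) ≥ 0, |f(0) − x_e| < ε, and f′(t) = λ − (μ − a·f(t))·min(f(t), C) for all t ≥ 0, converges to x_e as t → ∞ (i.e. f(t) → x_e). In other words, x_e is a locally asymptotically stable equilibrium of the single-class fluid dynamics ẋ = λ − (μ − a x)·min(x, C). -/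
/-- Local asymptotic stability of the good equilibrium
`x_e = (mu - √(mu^2 - 4*a*lam))/(2*a)` of the single-class fluid dynamics
`ẋ = lam - (mu - a*x)*min(x, C)`: there exists `ε > 0` such that every
solution starting nonnegatively within distance `ε` of `x_e` converges
to `x_e` as `t → ∞`. -/
theorem good_equilibrium_stable (a lam mu C : ℝ)
    (ha : 0 < a) (hlam : 0 < lam) (hmu : 0 < mu) (hC : 0 < C)
    (hD : 0 < mu ^ 2 - 4 * a * lam) (hload : lam < C * (mu - a * C)) :
    ∃ ε > 0, ∀ f : ℝ → ℝ,
      0 ≤ f 0 →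
      |f 0 - (mu - Real.sqrt (mu ^ 2 - 4 * a * lam)) / (2 * a)| < ε →
      (∀ t : ℝ, 0 ≤ t → HasDerivAt f (lam - (mu - a * f t) * min (f t) C) t) →
      Filter.Tendsto f Filter.atTop
        (nhds ((mu - Real.sqrt (mu ^ 2 - 4 * a * lam)) / (2 * a))) := by
  set s := Real.sqrt (mu ^ 2 - 4 * a * lam) with hs_def
  have hs0 : 0 < s := Real.sqrt_pos.mpr hD
  have hs2 : s ^ 2 = mu ^ 2 - 4 * a * lam := Real.sq_sqrt hD.le
  set xe := (mu - s) / (2 * a) with hxe_def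
  set xp := (mu + s) / (2 * a) with hxp_def
  have h2a : (0:ℝ) < 2 * a := by positivity
  have hxep : xe < xp := by
    rw [hxe_def, hxp_def, div_lt_div_iff₀ h2a h2a]
    nlinarith [hs0]
  -- key factorization
  have key : ∀ x : ℝ, lam - (mu - a * x) * x = a * (x - xe) * (x - xp) := by
    intro x
    rw [hxe_def, hxp_def]
    field_simp
    nlinarith [hs2]
  have hC1 : xe < C := by
    have hneg : a * (C - xe) * (C - xp) < 0 := by
      rw [← key C]; nlinarith
    by_contra h
    push_neg at h
    have h1 : C - xe ≤ 0 := by linarith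
    have h2 : C - xp ≤ 0 := by linarith
    have h3 : 0 ≤ (xe - C) * (xp - C) := mul_nonneg (by linarith) (by linarith)
    nlinarith [mul_nonneg ha.le h3]
  set eps := min (C - xe) (xp - xe) / 2 with heps_def
  have heps0 : 0 < eps := by
    rw [heps_def]
    have := lt_min (by linarith : (0:ℝ) < C - xe) (by linarith : (0:ℝ) < xp - xe)
    linarith
  have heps1 : eps ≤ (C - xe) / 2 := by
    rw [heps_def]; have := min_le_left (C - xe) (xp - xe); linarith
  have heps2 : 2 * eps ≤ xp - xe := by
    rw [heps_def]; have := min_le_right (C - xe) (xp - xe); linarith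
  refine ⟨eps, heps0, ?_⟩
  intro f hf0 hnear hode
  have hcont : ∀ t : ℝ, 0 ≤ t → ContinuousAt f t := fun t ht => (hode t ht).continuousAt
  have hode' : ∀ t : ℝ, 0 ≤ t → f t ≤ C →
      HasDerivAt f (a * (f t - xe) * (f t - xp)) t := by
    intro t ht hfC
    have h := hode t ht
    rwa [min_eq_left hfC, key (f t)] at h
  -- derivative of V = (f - xe)^2
  have hV : ∀ t : ℝ, 0 ≤ t → f t ≤ C →
      HasDerivAt (fun u => (f u - xe)^2)
        (2 * (f t - xe) * (a * (f t - xe) * (f t - xp))) t := by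
    intro t ht hfC
    have h1 := ((hode' t ht hfC).sub_const xe).fun_pow 2
    exact h1.congr_deriv (by ring)
  have hVcont : ∀ t : ℝ, 0 ≤ t → ContinuousAt (fun u => (f u - xe)^2) t := by
    intro t ht
    exact ((hcont t ht).sub continuousAt_const).pow 2
  have hV0 : (f 0 - xe)^2 < eps^2 := by
    have h := abs_lt.mp hnear
    exact sq_lt_sq' h.1 h.2
  -- small f implies f ≤ C
  have hsmall : ∀ x : ℝ, (x - xe)^2 ≤ eps^2 → x ≤ C ∧ x - xe ≤ eps ∧ -eps ≤ x - xe := by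
    intro x hx
    have h := abs_le_of_sq_le_sq' hx heps0.le
    exact ⟨by linarith [h.2], h.2, h.1⟩
  -- Invariance
  have hinv : ∀ t : ℝ, 0 ≤ t → (f t - xe)^2 < eps^2 := by
    by_contra hcon
    push_neg at hcon
    obtain ⟨t0, ht0, hVt0⟩ := hcon
    set S : Set ℝ := Set.Ici 0 ∩ (fun u => (f u - xe)^2) ⁻¹' Set.Ici (eps^2) with hS_def
    have hSne : S.Nonempty := ⟨t0, ht0, hVt0⟩
    have hSbdd : BddBelow S := ⟨0, fun x hx => hx.1⟩
    have hSclosed : IsClosed S := by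
      apply ContinuousOn.preimage_isClosed_of_isClosed ?_ isClosed_Ici isClosed_Ici
      exact fun u hu => (hVcont u hu).continuousWithinAt
    set T := sInf S with hT_def
    have hTmem : T ∈ S := hSclosed.csInf_mem hSne hSbdd
    have hT0 : 0 ≤ T := hTmem.1
    have hVT : eps^2 ≤ (f T - xe)^2 := hTmem.2
    have hTpos : 0 < T := by
      rcases eq_or_lt_of_le hT0 with h | h
      · exfalso; rw [← h] at hVT; linarith
      · exact h
    have hnotmem : ∀ u : ℝ, 0 ≤ u → u < T → (f u - xe)^2 < eps^2 := by
      intro u hu hut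
      by_contra h
      push_neg at h
      exact absurd (csInf_le hSbdd ⟨hu, h⟩) (not_le.mpr hut)
    have hVTle : (f T - xe)^2 ≤ eps^2 := by
      have htend : Filter.Tendsto (fun u => (f u - xe)^2) (nhdsWithin T (Set.Iio T))
          (nhds ((f T - xe)^2)) := ((hVcont T hT0).continuousWithinAt).tendsto
      refine le_of_tendsto htend ?_
      filter_upwards [Ioo_mem_nhdsLT hTpos]
        with u hu
      exact (hnotmem u hu.1.le hu.2).le
    have hVle : ∀ u ∈ Set.Icc 0 T, (f u - xe)^2 ≤ eps^2 := by
      intro u hu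
      rcases lt_or_eq_of_le hu.2 with h | h
      · exact (hnotmem u hu.1 h).le
      · rw [h]; exact hVTle
    have hanti : AntitoneOn (fun u => (f u - xe)^2) (Set.Icc 0 T) := by
      refine antitoneOn_of_deriv_nonpos (convex_Icc 0 T)
        (fun u hu => (hVcont u hu.1).continuousWithinAt) ?_ ?_
      · intro u hu
        rw [interior_Icc] at hu
        exact ((hV u hu.1.le (hsmall (f u) (hVle u ⟨hu.1.le, hu.2.le⟩)).1).differentiableAt).differentiableWithinAt
      · intro u hu
        rw [interior_Icc] at hu
        have hu0 : 0 ≤ u := hu.1.le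
        have huI : u ∈ Set.Icc 0 T := ⟨hu.1.le, hu.2.le⟩
        obtain ⟨hfC, hle, hge⟩ := hsmall (f u) (hVle u huI)
        have hd := hV u hu0 hfC
        rw [hd.deriv]
        have hq : f u - xp ≤ 0 := by linarith
        have heq : 2 * (f u - xe) * (a * (f u - xe) * (f u - xp))
            = (2 * a * (f u - xe)^2) * (f u - xp) := by ring
        rw [heq]
        exact mul_nonpos_of_nonneg_of_nonpos (by positivity) hq
    have := hanti (Set.left_mem_Icc.mpr hT0) (Set.right_mem_Icc.mpr hT0) hT0
    simp only at this
    linarith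
  have hfC2 : ∀ t : ℝ, 0 ≤ t → f t ≤ C := fun t ht => (hsmall (f t) (hinv t ht).le).1
  -- exponential decay of V
  set c := a * (xp - xe) with hc_def
  have hc : 0 < c := by
    rw [hc_def]; have : 0 < xp - xe := by linarith
    positivity
  have hh : ∀ t : ℝ, 0 ≤ t → HasDerivAt (fun u => (f u - xe)^2 * Real.exp (c * u))
      ((2 * (f t - xe) * (a * (f t - xe) * (f t - xp))) * Real.exp (c * t)
        + (f t - xe)^2 * (Real.exp (c * t) * c)) t := by
    intro t ht
    have hexp : HasDerivAt (fun u => Real.exp (c * u)) (Real.exp (c * t) * c) t := by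
      have h1 : HasDerivAt (fun u : ℝ => c * u) c t := by
        simpa using (hasDerivAt_id t).const_mul c
      exact h1.exp
    exact (hV t ht (hfC2 t ht)).mul hexp
  have hhanti : AntitoneOn (fun u => (f u - xe)^2 * Real.exp (c * u)) (Set.Ici 0) := by
    refine antitoneOn_of_deriv_nonpos (convex_Ici 0) ?_ ?_ ?_
    · intro u hu
      have hexpc : ContinuousAt (fun v : ℝ => Real.exp (c * v)) u := by fun_prop
      exact ((hVcont u hu).mul hexpc).continuousWithinAt
    · intro u hu
      rw [interior_Ici] at hu
      exact ((hh u hu.le).differentiableAt).differentiableWithinAt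
    · intro u hu
      rw [interior_Ici] at hu
      have hu0 : 0 ≤ u := hu.le
      have hd := hh u hu0
      rw [hd.deriv]
      obtain ⟨hfC, hle, hge⟩ := hsmall (f u) (hinv u hu0).le
      have heq : (2 * (f u - xe) * (a * (f u - xe) * (f u - xp))) * Real.exp (c * u)
          + (f u - xe)^2 * (Real.exp (c * u) * c)
          = (a * (f u - xe)^2 * Real.exp (c * u)) * (2 * (f u) - xp - xe) := by
        rw [hc_def]; ring
      rw [heq]
      apply mul_nonpos_of_nonneg_of_nonpos (by positivity)
      linarith
  have hdecay : ∀ t : ℝ, 0 ≤ t → (f t - xe)^2 ≤ (f 0 - xe)^2 * Real.exp (-(c * t)) := by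
    intro t ht
    have h := hhanti Set.self_mem_Ici ht ht
    simp only [mul_zero, Real.exp_zero, mul_one] at h
    have hepos : 0 < Real.exp (c * t) := Real.exp_pos _
    rw [Real.exp_neg, ← div_eq_mul_inv, le_div_iff₀ hepos]
    linarith
  -- conclude
  have hVtend : Filter.Tendsto (fun t => (f t - xe)^2) Filter.atTop (nhds 0) := by
    have hb : Filter.Tendsto (fun t : ℝ => (f 0 - xe)^2 * Real.exp (-(c * t)))
        Filter.atTop (nhds 0) := by
      have h1 : Filter.Tendsto (fun t : ℝ => c * t) Filter.atTop Filter.atTop :=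
        Filter.Tendsto.const_mul_atTop hc Filter.tendsto_id
      have h2 : Filter.Tendsto (fun t : ℝ => Real.exp (-(c * t))) Filter.atTop (nhds 0) :=
        Real.tendsto_exp_neg_atTop_nhds_zero.comp h1
      have := h2.const_mul ((f 0 - xe)^2)
      simpa using this
    refine tendsto_of_tendsto_of_tendsto_of_le_of_le' tendsto_const_nhds hb ?_ ?_
    · filter_upwards with t; positivity
    · filter_upwards [Filter.eventually_ge_atTop 0] with t ht
      exact hdecay t ht
  have habs_t : Filter.Tendsto (fun t => |f t - xe|) Filter.atTop (nhds 0) := by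
    have h := (Real.continuous_sqrt.tendsto 0).comp hVtend
    simpa [Function.comp_def, Real.sqrt_sq_eq_abs] using h
  rw [tendsto_iff_dist_tendsto_zero]
  simpa [Real.dist_eq] using habs_t
end

section
/- Let a, λ, μ, C be positive real numbers with μ² − 4aλ > 0, set x₁ = (μ − √(μ² − 4aλ))/(2a), and suppose x₁ < C. If f : ℝ → ℝ is differentiable with f′(t) = λ − (μ − a·f(t))·min(f(t), C) for all t ≥ 0 and 0 ≤ f(0) ≤ x₁, then f is monotone nondecreasing on [0, ∞), f(t) ≤ x₁ for all t ≥ 0, and f(t) → x₁ as t → ∞. -/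
set_option maxHeartbeats 1000000


/-- A fluid trajectory of `ẋ = lam - (mu - a*x)*min(x, C)` started in
`[0, x₁]`, where `x₁ = (mu - √(mu^2 - 4*a*lam))/(2*a) < C` is the smaller
root of the drift, is monotone nondecreasing, stays below `x₁`, and
converges to `x₁` as `t → ∞`. -/
theorem trajectory_converges_from_below (a lam mu C x₁ : ℝ)
    (ha : 0 < a) (hlam : 0 < lam) (hmu : 0 < mu) (hC : 0 < C)
    (hD : 0 < mu ^ 2 - 4 * a * lam)
    (hx₁ : x₁ = (mu - Real.sqrt (mu ^ 2 - 4 * a * lam)) / (2 * a))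
    (hx₁C : x₁ < C)
    (f : ℝ → ℝ)
    (hf : ∀ t : ℝ, 0 ≤ t → HasDerivAt f (lam - (mu - a * f t) * min (f t) C) t)
    (h0 : 0 ≤ f 0) (h0' : f 0 ≤ x₁) :
    MonotoneOn f (Set.Ici (0 : ℝ)) ∧
    (∀ t : ℝ, 0 ≤ t → f t ≤ x₁) ∧
    Filter.Tendsto f Filter.atTop (nhds x₁) := by
  have h2a : (0 : ℝ) < 2 * a := by linarith
  have hsq : Real.sqrt (mu ^ 2 - 4 * a * lam) ^ 2 = mu ^ 2 - 4 * a * lam :=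
    Real.sq_sqrt hD.le
  have hsq0 : 0 < Real.sqrt (mu ^ 2 - 4 * a * lam) := Real.sqrt_pos.mpr hD
  set x₂ : ℝ := (mu + Real.sqrt (mu ^ 2 - 4 * a * lam)) / (2 * a) with hx₂
  have hdiff : x₂ - x₁ = Real.sqrt (mu ^ 2 - 4 * a * lam) / a := by
    rw [hx₁, hx₂]; field_simp; ring
  have hx12 : x₁ < x₂ := by
    have := div_pos hsq0 ha; linarith
  have c1 : a * (x₁ + x₂) = mu := by
    rw [hx₁, hx₂]; field_simp; ring
  have c2 : a * (x₁ * x₂) = lam := by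
    rw [hx₁, hx₂]; field_simp; nlinarith [hsq, Real.sq_sqrt (show (0:ℝ) ≤ mu ^ 2 - a * 4 * lam by linarith)]
  have key : ∀ y : ℝ, lam - (mu - a * y) * y = a * (y - x₁) * (y - x₂) := by
    intro y; linear_combination y * c1 - c2
  have cont : ContinuousOn f (Set.Ici (0 : ℝ)) := fun t ht =>
    (hf t ht).continuousAt.continuousWithinAt
  -- Invariance: the trajectory stays at or below x₁.
  have inv : ∀ t : ℝ, 0 ≤ t → f t ≤ x₁ := by
    intro t₀ ht₀
    by_contra hcon
    push_neg at hcon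
    set b : ℝ := min ((x₁ + C) / 2) (min ((x₁ + x₂) / 2) ((x₁ + f t₀) / 2)) with hb
    have hbx : x₁ < b := by
      simp only [hb, lt_min_iff]
      exact ⟨by linarith, by linarith, by linarith⟩
    have hbC : b < C := by
      have : b ≤ (x₁ + C) / 2 := min_le_left _ _
      linarith
    have hbx2 : b < x₂ := by
      have : b ≤ (x₁ + x₂) / 2 := le_trans (min_le_right _ _) (min_le_left _ _)
      linarith
    have hbt : b < f t₀ := by
      have : b ≤ (x₁ + f t₀) / 2 := le_trans (min_le_right _ _) (min_le_right _ _)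
      linarith
    have contIcc : ContinuousOn f (Set.Icc 0 t₀) := cont.mono Set.Icc_subset_Ici_self
    have hmemb : b ∈ Set.Icc (f 0) (f t₀) := ⟨by linarith, hbt.le⟩
    obtain ⟨u, hu, hub⟩ := intermediate_value_Icc ht₀ contIcc hmemb
    set T : Set ℝ := Set.Icc 0 t₀ ∩ f ⁻¹' {b} with hT
    have hTne : T.Nonempty := ⟨u, hu, hub⟩
    have hTclosed : IsClosed T :=
      contIcc.preimage_isClosed_of_isClosed isClosed_Icc isClosed_singleton
    have hTbdd : BddBelow T := ⟨0, fun x hx => hx.1.1⟩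
    set t := sInf T with htdef
    have htT : t ∈ T := hTclosed.csInf_mem hTne hTbdd
    have htmem : t ∈ Set.Icc 0 t₀ := htT.1
    have hft : f t = b := htT.2
    -- On [0, t], f stays ≤ b.
    have hub' : ∀ u ∈ Set.Icc (0:ℝ) t, f u ≤ b := by
      intro v hv
      by_contra hgt; push_neg at hgt
      have hv0 : (0:ℝ) ≤ v := hv.1
      have hvlt : v < t := by
        rcases lt_or_eq_of_le hv.2 with h | h
        · exact h
        · exfalso; rw [h, hft] at hgt; exact lt_irrefl _ hgt
      have hmem2 : b ∈ Set.Icc (f 0) (f v) := ⟨by linarith, hgt.le⟩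
      obtain ⟨w, hw, hwb⟩ := intermediate_value_Icc hv0
        (contIcc.mono (Set.Icc_subset_Icc_right (by linarith [htmem.2]))) hmem2
      have hwT : w ∈ T := ⟨⟨hw.1, by linarith [hw.2, htmem.2]⟩, hwb⟩
      have := csInf_le hTbdd hwT
      linarith [hw.2]
    -- find the last time before t where f equals x₁
    have hx1mem : x₁ ∈ Set.Icc (f 0) (f t) := ⟨h0', by rw [hft]; exact hbx.le⟩
    have contIcct : ContinuousOn f (Set.Icc 0 t) :=
      contIcc.mono (Set.Icc_subset_Icc_right htmem.2)
    obtain ⟨w, hw, hwx⟩ := intermediate_value_Icc htmem.1 contIcct hx1mem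
    set S : Set ℝ := Set.Icc 0 t ∩ f ⁻¹' {x₁} with hS
    have hSne : S.Nonempty := ⟨w, hw, hwx⟩
    have hSclosed : IsClosed S :=
      contIcct.preimage_isClosed_of_isClosed isClosed_Icc isClosed_singleton
    have hSbdd : BddAbove S := ⟨t, fun x hx => hx.1.2⟩
    set r := sSup S with hrdef
    have hrS : r ∈ S := hSclosed.csSup_mem hSne hSbdd
    have hfr : f r = x₁ := hrS.2
    have hr0 : 0 ≤ r := hrS.1.1
    have hrt : r ≤ t := hrS.1.2
    -- On [r, t], f stays ≥ x₁.
    have hlb : ∀ u ∈ Set.Icc r t, x₁ ≤ f u := by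
      intro v hv
      by_contra hgt; push_neg at hgt
      have hvr : r < v := by
        rcases eq_or_lt_of_le hv.1 with h | h
        · exfalso; rw [← h, hfr] at hgt; exact lt_irrefl _ hgt
        · exact h
      have hmem3 : x₁ ∈ Set.Icc (f v) (f t) := ⟨hgt.le, by rw [hft]; exact hbx.le⟩
      obtain ⟨w', hw', hw'x⟩ := intermediate_value_Icc hv.2
        (contIcct.mono (Set.Icc_subset_Icc (by linarith) le_rfl)) hmem3
      have hw'S : w' ∈ S := ⟨⟨by linarith [hw'.1], hw'.2⟩, hw'x⟩
      have := le_csSup hSbdd hw'S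
      linarith [hw'.1]
    -- f is antitone on [r, t], hence f t ≤ f r = x₁ < b = f t, contradiction.
    have hanti : AntitoneOn f (Set.Icc r t) := by
      apply antitoneOn_of_deriv_nonpos (convex_Icc r t)
        (contIcct.mono (Set.Icc_subset_Icc hr0 le_rfl))
      · intro u hu
        rw [interior_Icc] at hu
        exact (hf u (by linarith [hu.1])).differentiableAt.differentiableWithinAt
      · intro u hu
        rw [interior_Icc] at hu
        have hu0 : (0:ℝ) ≤ u := by linarith [hu.1]
        have h1 : x₁ ≤ f u := hlb u ⟨hu.1.le, hu.2.le⟩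
        have h2 : f u ≤ b := hub' u ⟨hu0, hu.2.le⟩
        have hmin : min (f u) C = f u := min_eq_left (by linarith)
        have hd : deriv f u = a * (f u - x₁) * (f u - x₂) := by
          rw [(hf u hu0).deriv, hmin, key]
        rw [hd]
        nlinarith [mul_nonneg (sub_nonneg.2 h1) (by linarith : (0:ℝ) ≤ x₂ - f u)]
    have hcontra : f t ≤ f r := hanti ⟨le_rfl, hrt⟩ ⟨hrt, le_rfl⟩ hrt
    rw [hft, hfr] at hcontra
    linarith
  -- Monotonicity on [0, ∞).
  have hmono : MonotoneOn f (Set.Ici (0 : ℝ)) := by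
    apply monotoneOn_of_deriv_nonneg (convex_Ici 0) cont
    · intro u hu
      rw [interior_Ici] at hu
      exact (hf u hu.le).differentiableAt.differentiableWithinAt
    · intro u hu
      rw [interior_Ici] at hu
      have h1 : f u ≤ x₁ := inv u hu.le
      have hmin : min (f u) C = f u := min_eq_left (by linarith)
      have hd : deriv f u = a * (f u - x₁) * (f u - x₂) := by
        rw [(hf u hu.le).deriv, hmin, key]
      rw [hd]
      nlinarith [mul_nonneg (by linarith : (0:ℝ) ≤ x₁ - f u)
        (by linarith : (0:ℝ) ≤ x₂ - f u)]
  -- The trajectory eventually exceeds x₁ - ε for every ε > 0.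
  have reach : ∀ ε : ℝ, 0 < ε → ∃ t₀ : ℝ, 0 ≤ t₀ ∧ x₁ - ε < f t₀ := by
    intro ε hε
    by_contra hcon; push_neg at hcon
    have hδ0 : 0 < a * ε * (x₂ - x₁ + ε) := by
      apply mul_pos (mul_pos ha hε); linarith
    set δ : ℝ := a * ε * (x₂ - x₁ + ε) with hδ
    have hg : MonotoneOn (fun u => f u - δ * u) (Set.Ici (0:ℝ)) := by
      apply monotoneOn_of_deriv_nonneg (convex_Ici 0)
      · exact cont.sub ((continuous_const.mul continuous_id).continuousOn)
      · intro u hu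
        rw [interior_Ici] at hu
        exact ((hf u hu.le).sub
          ((hasDerivAt_id u).const_mul δ)).differentiableAt.differentiableWithinAt
      · intro u hu
        rw [interior_Ici] at hu
        have hder : HasDerivAt (fun u => f u - δ * u)
            (lam - (mu - a * f u) * min (f u) C - δ * 1) u :=
          (hf u hu.le).sub ((hasDerivAt_id u).const_mul δ)
        rw [hder.deriv]
        have h1 : f u ≤ x₁ - ε := hcon u hu.le
        have hmin : min (f u) C = f u := min_eq_left (by linarith)
        rw [hmin, key (f u)]
        have hp : ε * (x₂ - x₁ + ε) ≤ (x₁ - f u) * (x₂ - f u) :=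
          mul_le_mul (by linarith) (by linarith) (by linarith) (by linarith)
        have hp2 := mul_le_mul_of_nonneg_left hp ha.le
        nlinarith [hp2]
    have hgrow : ∀ u : ℝ, 0 ≤ u → f 0 + δ * u ≤ f u := by
      intro u hu
      have := hg (Set.mem_Ici.2 le_rfl) (Set.mem_Ici.2 hu) hu
      simp only [mul_zero, sub_zero] at this
      linarith
    set tb : ℝ := (x₁ - f 0) / δ + 1 with htb
    have htb0 : 0 ≤ tb := by
      have := div_nonneg (by linarith : (0:ℝ) ≤ x₁ - f 0) hδ0.le
      rw [htb]; linarith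
    have hval : δ * tb = x₁ - f 0 + δ := by
      rw [htb]; field_simp
    have h1 := hgrow tb htb0
    have h2 := hcon tb htb0
    rw [hval] at h1
    linarith
  refine ⟨hmono, inv, ?_⟩
  rw [Metric.tendsto_atTop]
  intro ε hε
  obtain ⟨t₀, ht₀, hft₀⟩ := reach (ε / 2) (by linarith)
  refine ⟨t₀, fun t ht => ?_⟩
  have htt : (0:ℝ) ≤ t := le_trans ht₀ ht
  have h1 : f t₀ ≤ f t := hmono (Set.mem_Ici.2 ht₀) (Set.mem_Ici.2 htt) ht
  have h2 : f t ≤ x₁ := inv t htt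
  rw [Real.dist_eq, abs_lt]
  constructor <;> linarith
end
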